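/- arXiv:2311.01024 — 2 statements merged into one kernel-verified Lean document; each statement's English description precedes it below -/
import Mathlib

section
/- For every vertex o reachable from s and every iteration t with dist(s,o) ≤ t ≤ dist(s,o)+δ, the truncated Bellman–Ford iterate satisfies y⁽ᵗ⁾(o) = ∑_{ℓ=dist(s,o)}^{t} ∑_{p ∈ P_ℓ(s,o)} weight(p), where P_ℓ(s,o) denotes the set of walks of length ℓ from s to o in G. In particular, the hidden representation at iteration dist(s,o)+k contains exactly the walks of lengths dist(s,o) through dist(s,o)+k, for each 0 ≤ k ≤ δ. -/
open Finset

/-- The weight of a walk: the product of the edge weights `wt v_{i-1} v_i` along the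
walk, with the length-0 walk having weight 1. -/
def SimpleGraph.Walk.weight {V : Type*} {G : SimpleGraph V} {R : Type*} [CommSemiring R]
    (wt : V → V → R) {u v : V} (p : G.Walk u v) : R :=
  (p.darts.map fun d => wt d.fst d.snd).prod

/-- `pathSum G wt t s o = ∑_{p ∈ P_t(s,o)} weight(p)`, the sum of the weights of all
walks of length `t` from `s` to `o` in `G`. -/
def pathSum {V : Type*} [Fintype V] [DecidableEq V] (G : SimpleGraph V) [DecidableRel G.Adj]
    {R : Type*} [CommSemiring R] (wt : V → V → R) (t : ℕ) (s o : V) : R :=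
  ∑ p ∈ G.finsetWalkLength t s o, p.weight wt

open Classical in
/-- The truncated Bellman–Ford iterates `y_δ⁽ᵗ⁾` with source `s` and offset `δ`:
`y⁽⁰⁾(o) = 1` if `o = s` and `0` otherwise; for `t ≥ 1`, if `o` is reachable from `s`
and `dist(s,o) ≤ t ≤ dist(s,o) + δ` then `o` aggregates, over the constrained edge set
(neighbors `u` reachable from `s` with `dist(s,u) < dist(s,o) + δ`), the messages
`y⁽ᵗ⁻¹⁾(u) * wt u o`, plus `y⁽⁰⁾(o)`; otherwise `y⁽ᵗ⁾(o) = y⁽ᵗ⁻¹⁾(o)`. -/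
noncomputable def truncBF {V : Type*} [Fintype V] (G : SimpleGraph V)
    {R : Type*} [CommSemiring R] (wt : V → V → R) (s : V) (δ : ℕ) : ℕ → V → R
  | 0 => fun o => if o = s then 1 else 0
  | (t + 1) => fun o =>
      if G.Reachable s o ∧ G.dist s o ≤ t + 1 ∧ t + 1 ≤ G.dist s o + δ then
        (∑ u ∈ Finset.univ.filter
            (fun u => G.Adj u o ∧ G.Reachable s u ∧ G.dist s u < G.dist s o + δ),
          truncBF G wt s δ t u * wt u o) + (if o = s then 1 else 0)
      else truncBF G wt s δ t o

section Aux
set_option linter.unusedSectionVars false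

variable {V : Type*} [Fintype V] [DecidableEq V] (G : SimpleGraph V) [DecidableRel G.Adj]
  {R : Type*} [CommSemiring R] (wt : V → V → R)

lemma pathSum_eq_zero_of_no_walk {t : ℕ} {s o : V}
    (h : ∀ p : G.Walk s o, p.length ≠ t) : pathSum G wt t s o = 0 := by
  apply Finset.sum_eq_zero
  intro p hp
  exact absurd (SimpleGraph.mem_finsetWalkLength_iff.mp hp) (h p)

lemma pathSum_eq_zero_of_not_reachable {t : ℕ} {s o : V}
    (h : ¬ G.Reachable s o) : pathSum G wt t s o = 0 :=
  pathSum_eq_zero_of_no_walk G wt fun p _ => h ⟨p⟩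

lemma pathSum_eq_zero_of_lt_dist {t : ℕ} {s o : V}
    (h : t < G.dist s o) : pathSum G wt t s o = 0 :=
  pathSum_eq_zero_of_no_walk G wt fun p hp => absurd (hp ▸ SimpleGraph.dist_le p) (by omega)

lemma pathSum_zero (s o : V) : pathSum G wt 0 s o = if o = s then 1 else 0 := by
  by_cases h : o = s
  · subst h
    simp [pathSum, SimpleGraph.finsetWalkLength, SimpleGraph.Walk.weight]
  · simp [pathSum, SimpleGraph.finsetWalkLength, Ne.symm h, h]

lemma weight_reverse {s o : V} (p : G.Walk s o) :
    p.reverse.weight wt = p.weight (fun a b => wt b a) := by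
  simp only [SimpleGraph.Walk.weight, SimpleGraph.Walk.darts_reverse, List.map_reverse,
    List.prod_reverse, List.map_map]
  rfl

lemma pathSum_reverse (t : ℕ) (s o : V) :
    pathSum G wt t s o = pathSum G (fun a b => wt b a) t o s := by
  unfold pathSum
  refine Finset.sum_nbij' (fun p => p.reverse) (fun p => p.reverse) ?_ ?_ ?_ ?_ ?_
  · intro p hp
    simp_all [SimpleGraph.mem_finsetWalkLength_iff, SimpleGraph.Walk.length_reverse]
  · intro p hp
    simp_all [SimpleGraph.mem_finsetWalkLength_iff, SimpleGraph.Walk.length_reverse]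
  · intro p _; exact p.reverse_reverse
  · intro p _; exact p.reverse_reverse
  · intro p _
    rw [weight_reverse]

lemma pathSum_succ_front (t : ℕ) (s o : V) :
    pathSum G wt (t + 1) s o =
      ∑ u ∈ G.neighborFinset s, wt s u * pathSum G wt t u o := by
  unfold pathSum
  show ∑ p ∈ Finset.univ.biUnion _, _ = _
  rw [Finset.sum_biUnion]
  · rw [show G.neighborFinset s = (G.neighborSet s).toFinset from rfl,
      ← Finset.sum_set_coe (s := G.neighborSet s)
      (f := fun u => wt s u * ∑ p ∈ G.finsetWalkLength t u o, p.weight wt)]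
    apply Finset.sum_congr rfl
    intro w _
    rw [Finset.sum_map, Finset.mul_sum]
    apply Finset.sum_congr rfl
    intro p _
    change (List.map _ (SimpleGraph.Walk.cons (show G.Adj s w from w.property) p).darts).prod = _
    rw [SimpleGraph.Walk.darts_cons, List.map_cons, List.prod_cons]
    rfl
  · intro w _ w' _ hne
    apply Finset.disjoint_left.mpr
    intro p hp hp'
    obtain ⟨q, hq, rfl⟩ := Finset.mem_map.mp hp
    obtain ⟨q', hq', heq⟩ := Finset.mem_map.mp hp'
    change SimpleGraph.Walk.cons _ q' = SimpleGraph.Walk.cons _ q at heq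
    apply hne
    injection heq with h1 h2 h3
    exact Subtype.ext h2.symm

lemma pathSum_succ_back (t : ℕ) (s o : V) :
    pathSum G wt (t + 1) s o =
      ∑ u ∈ G.neighborFinset o, pathSum G wt t s u * wt u o := by
  rw [pathSum_reverse, pathSum_succ_front]
  apply Finset.sum_congr rfl
  intro u _
  rw [mul_comm, pathSum_reverse G (fun a b => wt b a) t u s]

lemma truncBF_eq_zero_of_not_reachable {s o : V} (δ : ℕ)
    (h : ¬ G.Reachable s o) : ∀ t, truncBF G wt s δ t o = 0 := by
  intro t
  induction t with
  | zero =>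
    have : o ≠ s := by rintro rfl; exact h (SimpleGraph.Reachable.refl o)
    simp [truncBF, this]
  | succ t ih =>
    rw [truncBF]
    beta_reduce
    rw [if_neg (fun hc => h hc.1)]
    exact ih

lemma truncBF_eq_zero_of_lt_dist {s o : V} (δ : ℕ) :
    ∀ t, t < G.dist s o → truncBF G wt s δ t o = 0 := by
  intro t
  induction t with
  | zero =>
    intro ht
    have : o ≠ s := by
      rintro rfl
      simp [SimpleGraph.dist_self] at ht
    simp [truncBF, this]
  | succ t ih =>
    intro ht
    rw [truncBF]
    beta_reduce
    rw [if_neg (fun hc => absurd hc.2.1 (by omega))]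
    exact ih (by omega)

lemma dist_le_adj {s u o : V} (hr : G.Reachable s u) (ha : G.Adj u o) :
    G.dist s o ≤ G.dist s u + 1 := by
  obtain ⟨p, hp⟩ := hr.exists_walk_length_eq_dist
  calc G.dist s o ≤ (p.concat ha).length := SimpleGraph.dist_le _
    _ = G.dist s u + 1 := by rw [SimpleGraph.Walk.length_concat, hp]

end Aux

/-- For every vertex `o` reachable from `s` and every iteration `t`
with `dist(s,o) ≤ t ≤ dist(s,o) + δ`, the truncated Bellman–Ford iterate satisfies
`y⁽ᵗ⁾(o) = ∑_{ℓ=dist(s,o)}^{t} ∑_{p ∈ P_ℓ(s,o)} weight(p)`. -/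
theorem truncBF_iterate_eq_pathSum {V : Type*} [Fintype V] [DecidableEq V]
    (G : SimpleGraph V) [DecidableRel G.Adj] {R : Type*} [CommSemiring R]
    (wt : V → V → R) (s : V) (δ : ℕ) (o : V) (h : G.Reachable s o)
    (t : ℕ) (h₁ : G.dist s o ≤ t) (h₂ : t ≤ G.dist s o + δ) :
    truncBF G wt s δ t o = ∑ ℓ ∈ Finset.Icc (G.dist s o) t, pathSum G wt ℓ s o := by
  induction t generalizing o with
  | zero =>
    have hd : G.dist s o = 0 := Nat.le_zero.mp h₁
    have : s = o := ((SimpleGraph.dist_eq_zero_iff_eq_or_not_reachable).mp hd).resolve_right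
      (fun hc => hc h)
    subst this
    simp [truncBF, hd, pathSum_zero]
  | succ t ih =>
    rw [truncBF]
    beta_reduce
    rw [if_pos ⟨h, h₁, h₂⟩]
    -- RHS rewriting
    have hIcc : Finset.Icc (G.dist s o) (t + 1) ⊆ Finset.range (t + 2) := by
      intro x hx; simp only [Finset.mem_Icc] at hx; simp; omega
    have hzero : ∀ x ∈ Finset.range (t + 2), x ∉ Finset.Icc (G.dist s o) (t + 1) →
        pathSum G wt x s o = 0 := by
      intro x hx hx'
      simp only [Finset.mem_range] at hx
      simp only [Finset.mem_Icc] at hx'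
      exact pathSum_eq_zero_of_lt_dist G wt (by omega)
    rw [Finset.sum_subset hIcc hzero, Finset.sum_range_succ' (fun ℓ => pathSum G wt ℓ s o)]
    rw [pathSum_zero]
    congr 1
    on_goal 2 => split_ifs <;> rfl
    -- main sum identity
    have hstep : ∀ ℓ, pathSum G wt (ℓ + 1) s o
        = ∑ u ∈ G.neighborFinset o, pathSum G wt ℓ s u * wt u o :=
      fun ℓ => pathSum_succ_back G wt ℓ s o
    rw [Finset.filter_congr_decidable]
    calc ∑ u ∈ Finset.univ.filter
            (fun u => G.Adj u o ∧ G.Reachable s u ∧ G.dist s u < G.dist s o + δ),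
          truncBF G wt s δ t u * wt u o
        = ∑ u ∈ Finset.univ.filter
            (fun u => G.Adj u o ∧ G.Reachable s u ∧ G.dist s u < G.dist s o + δ),
          (∑ ℓ ∈ Finset.range (t + 1), pathSum G wt ℓ s u) * wt u o := by
          apply Finset.sum_congr rfl
          intro u hu
          simp only [Finset.mem_filter] at hu
          obtain ⟨-, ha, hru, hdu⟩ := hu
          congr 1
          by_cases hle : G.dist s u ≤ t
          · have hdo : G.dist s o ≤ G.dist s u + 1 := dist_le_adj G hru ha
            rw [ih u hru hle (by omega)]
            apply Finset.sum_subset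
            · intro x hx; simp only [Finset.mem_Icc] at hx; simp; omega
            · intro x hx hx'
              simp only [Finset.mem_range] at hx
              simp only [Finset.mem_Icc] at hx'
              exact pathSum_eq_zero_of_lt_dist G wt (by omega)
          · rw [truncBF_eq_zero_of_lt_dist G wt δ t (by omega)]
            symm
            apply Finset.sum_eq_zero
            intro x hx
            simp only [Finset.mem_range] at hx
            exact pathSum_eq_zero_of_lt_dist G wt (by omega)
      _ = ∑ u ∈ G.neighborFinset o,
            (∑ ℓ ∈ Finset.range (t + 1), pathSum G wt ℓ s u) * wt u o := by
          apply Finset.sum_subset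
          · intro u hu
            simp only [Finset.mem_filter] at hu
            rw [SimpleGraph.mem_neighborFinset]
            exact hu.2.1.symm
          · intro u hu hu'
            rw [SimpleGraph.mem_neighborFinset] at hu
            simp only [Finset.mem_filter, Finset.mem_univ, true_and, not_and] at hu'
            by_cases hru : G.Reachable s u
            · have hdu : ¬ G.dist s u < G.dist s o + δ := fun hc => hu' hu.symm hru hc
              have : ∀ ℓ ∈ Finset.range (t + 1), pathSum G wt ℓ s u = 0 := by
                intro ℓ hℓ
                simp only [Finset.mem_range] at hℓ
                exact pathSum_eq_zero_of_lt_dist G wt (by omega)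
              rw [Finset.sum_eq_zero this, zero_mul]
            · have : ∀ ℓ ∈ Finset.range (t + 1), pathSum G wt ℓ s u = 0 :=
                fun ℓ _ => pathSum_eq_zero_of_not_reachable G wt hru
              rw [Finset.sum_eq_zero this, zero_mul]
      _ = ∑ ℓ ∈ Finset.range (t + 1), pathSum G wt (ℓ + 1) s o := by
          simp_rw [Finset.sum_mul]
          rw [Finset.sum_comm]
          exact Finset.sum_congr rfl fun ℓ _ => (hstep ℓ).symm
end

section
/- Let o be a 1-hop neighbor of the source s, i.e., dist(s,o) = 1. Then the representation of o after 1+δ iterations of the truncated Bellman–Ford with offset δ at minimum aggregates all walk representations of length between 1 and 1+δ: there exists c ∈ R with y⁽¹⁺ᵟ⁾(o) = (∑_{ℓ=1}^{1+δ} ∑_{p ∈ P_ℓ(s,o)} weight(p)) + c; equivalently, ∑_{ℓ=1}^{1+δ} ∑_{p ∈ P_ℓ(s,o)} weight(p) ≤ y⁽¹⁺ᵟ⁾(o) in the canonical order of R. -/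
open Finset

set_option linter.unusedSectionVars false


section Aux
variable {V : Type*} [Fintype V] [DecidableEq V] {G : SimpleGraph V} [DecidableRel G.Adj]
variable {R : Type*} [CommSemiring R]

lemma weight_cons (wt : V → V → R) {u v w : V} (h : G.Adj u v) (p : G.Walk v w) :
    (SimpleGraph.Walk.cons h p).weight wt = wt u v * p.weight wt := by
  simp [SimpleGraph.Walk.weight, SimpleGraph.Walk.darts_cons]

lemma sum_weight_succ (wt : V → V → R) (n : ℕ) (u v : V) :
    ∑ p ∈ G.finsetWalkLength (n + 1) u v, p.weight wt
      = ∑ w ∈ Finset.univ.filter (fun w => G.Adj u w),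
          wt u w * ∑ q ∈ G.finsetWalkLength n w v, q.weight wt := by
  rw [show G.finsetWalkLength (n+1) u v = Finset.univ.biUnion fun (w : G.neighborSet u) =>
    (G.finsetWalkLength n w v).map
      ⟨fun p => SimpleGraph.Walk.cons w.property p, fun _ _ h => eq_of_heq (SimpleGraph.Walk.cons.inj h).2⟩ from rfl]
  rw [Finset.sum_biUnion]
  · have step : ∀ w : G.neighborSet u,
        (∑ i ∈ (G.finsetWalkLength n (↑w) v).map
          ⟨fun p => SimpleGraph.Walk.cons w.property p, fun _ _ h => eq_of_heq (SimpleGraph.Walk.cons.inj h).2⟩,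
            SimpleGraph.Walk.weight wt i)
        = wt u ↑w * ∑ q ∈ G.finsetWalkLength n (↑w) v, q.weight wt := by
      intro w
      rw [Finset.sum_map, Finset.mul_sum]
      exact Finset.sum_congr rfl fun q _ => weight_cons wt w.property q
    rw [Finset.sum_congr rfl fun w _ => step w,
      ← Finset.sum_subtype (Finset.univ.filter (fun w => G.Adj u w))
        (by simp [SimpleGraph.mem_neighborSet])
        (fun w => wt u w * ∑ q ∈ G.finsetWalkLength n w v, q.weight wt)]
  · intro a _ b _ hab
    simp only [Function.onFun, Finset.disjoint_left]
    intro p hp hp'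
    simp only [Finset.mem_map, Function.Embedding.coeFn_mk] at hp hp'
    obtain ⟨q, _, rfl⟩ := hp
    obtain ⟨q', _, h'⟩ := hp'
    apply hab
    replace h' := SimpleGraph.Walk.cons.inj h'
    exact Subtype.ext h'.1.symm

lemma pathSum_eq_reverse (wt : V → V → R) (n : ℕ) (s o : V) :
    pathSum G wt n s o = ∑ q ∈ G.finsetWalkLength n o s, q.weight (fun a b => wt b a) := by
  rw [pathSum]
  apply Finset.sum_nbij' (fun p => p.reverse) (fun q => q.reverse) <;>
    simp [SimpleGraph.mem_finsetWalkLength_iff, SimpleGraph.Walk.weight,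
      SimpleGraph.Walk.darts_reverse, List.map_reverse, List.prod_reverse, List.map_map,
      Function.comp_def]

lemma pathSum_succ (wt : V → V → R) (n : ℕ) (s o : V) :
    pathSum G wt (n + 1) s o
      = ∑ u ∈ Finset.univ.filter (fun u => G.Adj u o), pathSum G wt n s u * wt u o := by
  rw [pathSum_eq_reverse, sum_weight_succ]
  refine Finset.sum_congr (by ext u; simp [SimpleGraph.adj_comm]) fun u hu => ?_
  rw [mul_comm, pathSum_eq_reverse wt n s u]

lemma pathSum_of_not_reachable (wt : V → V → R) {n : ℕ} {s o : V} (h : ¬ G.Reachable s o) :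
    pathSum G wt n s o = 0 := by
  have : G.finsetWalkLength n s o = ∅ :=
    Finset.eq_empty_of_forall_notMem fun p _ => h p.reachable
  rw [pathSum, this, Finset.sum_empty]

lemma pathSum_of_lt_dist (wt : V → V → R) {n : ℕ} {s o : V} (h : n < G.dist s o) :
    pathSum G wt n s o = 0 := by
  have : G.finsetWalkLength n s o = ∅ :=
    Finset.eq_empty_of_forall_notMem fun p hp => by
      have := SimpleGraph.dist_le p
      rw [SimpleGraph.mem_finsetWalkLength_iff.mp hp] at this
      omega
  rw [pathSum, this, Finset.sum_empty]

lemma pathSum_zero_self (wt : V → V → R) (s : V) : pathSum G wt 0 s s = 1 := by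
  have : G.finsetWalkLength 0 s s = {SimpleGraph.Walk.nil} := by
    simp [SimpleGraph.finsetWalkLength]
  rw [pathSum, this, Finset.sum_singleton]
  rfl

end Aux

section Main
variable {V : Type*} [Fintype V] [DecidableEq V] {G : SimpleGraph V} [DecidableRel G.Adj]
variable {R : Type*} [CommSemiring R] [PartialOrder R] [CanonicallyOrderedAdd R]

lemma truncBF_invariant (wt : V → V → R) (s : V) (δ : ℕ) (t : ℕ) :
    ∀ o, G.Reachable s o →
      ∑ ℓ ∈ Finset.Icc (G.dist s o) (min t (G.dist s o + δ)), pathSum G wt ℓ s o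
        ≤ truncBF G wt s δ t o := by
  induction t with
  | zero =>
    intro o hro
    rcases Nat.eq_zero_or_pos (G.dist s o) with h0 | hpos
    · obtain rfl : s = o := hro.dist_eq_zero_iff.mp h0
      simp [truncBF, h0, pathSum_zero_self]
    · rw [Finset.Icc_eq_empty (by omega), Finset.sum_empty]
      exact zero_le
  | succ t ih =>
    intro o hro
    by_cases hC : G.Reachable s o ∧ G.dist s o ≤ t + 1 ∧ t + 1 ≤ G.dist s o + δ
    · simp only [truncBF]; rw [if_pos hC]
      set d := G.dist s o with hd
      rw [min_eq_left hC.2.2]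
      rw [show (@ite R (o = s) (Classical.propDecidable (o = s)) 1 0)
        = (if o = s then (1:R) else 0) from by congr]
      have step1 : ∑ ℓ ∈ Finset.Icc d (t + 1), pathSum G wt ℓ s o
          ≤ (∑ ℓ ∈ Finset.Icc 1 (t + 1), pathSum G wt ℓ s o) + (if o = s then 1 else 0) := by
        rcases Nat.eq_zero_or_pos d with h0 | hpos
        · obtain rfl : s = o := hro.dist_eq_zero_iff.mp h0
          rw [h0, show Finset.Icc 0 (t+1) = insert 0 (Finset.Icc 1 (t+1)) from by
              ext x
              simp only [Finset.mem_Icc, Finset.mem_insert]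
              omega,
            Finset.sum_insert (by simp), pathSum_zero_self, if_pos rfl, add_comm]
        · refine le_add_right (Finset.sum_le_sum_of_subset ?_)
          exact Finset.Icc_subset_Icc (by omega) le_rfl
      have key : ∀ F : Finset V,
          (∀ u, u ∈ F ↔ (G.Adj u o ∧ G.Reachable s u ∧ G.dist s u < d + δ)) →
          ∑ ℓ ∈ Finset.Icc 1 (t + 1), pathSum G wt ℓ s o
            ≤ ∑ u ∈ F, truncBF G wt s δ t u * wt u o := by
        intro F hmem
        have step2 : ∀ ℓ ∈ Finset.Icc 0 t, pathSum G wt (ℓ + 1) s o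
            = ∑ u ∈ F, pathSum G wt ℓ s u * wt u o := by
          intro ℓ hℓ
          rw [pathSum_succ]
          refine (Finset.sum_subset ?_ ?_).symm
          · intro u hu
            simp only [Finset.mem_filter, Finset.mem_univ, true_and]
            exact ((hmem u).mp hu).1
          · intro u hu hnu
            simp only [Finset.mem_filter, Finset.mem_univ, true_and] at hu
            rw [hmem u] at hnu
            by_cases hr : G.Reachable s u
            · have hdu : d + δ ≤ G.dist s u := by
                rcases Nat.lt_or_ge (G.dist s u) (d + δ) with h | h
                · exact absurd ⟨hu, hr, h⟩ hnu
                · exact h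
              have : ℓ < G.dist s u := by
                simp only [Finset.mem_Icc] at hℓ
                have := hC.2.2
                omega
              rw [pathSum_of_lt_dist wt this, zero_mul]
            · rw [pathSum_of_not_reachable wt hr, zero_mul]
        have reindex : ∑ ℓ ∈ Finset.Icc 1 (t + 1), pathSum G wt ℓ s o
            = ∑ ℓ ∈ Finset.Icc 0 t, pathSum G wt (ℓ + 1) s o := by
          rw [show Finset.Icc 1 (t+1) = (Finset.Icc 0 t).map
            ⟨fun x => x + 1, fun a b h => by simpa using h⟩ from by
              ext x
              simp only [Finset.mem_map, Finset.mem_Icc, Function.Embedding.coeFn_mk]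
              constructor
              · intro hx; exact ⟨x - 1, by omega, by show x - 1 + 1 = x; omega⟩
              · rintro ⟨a, ha, rfl⟩; show 1 ≤ a + 1 ∧ a + 1 ≤ t + 1; omega, Finset.sum_map]
          rfl
        rw [reindex, Finset.sum_congr rfl step2, Finset.sum_comm]
        refine Finset.sum_le_sum fun u hu => ?_
        rw [← Finset.sum_mul]
        refine mul_le_mul_left ?_ (wt u o)
        obtain ⟨hadj, hru, hdu⟩ := (hmem u).mp hu
        have hdle : d ≤ G.dist s u + 1 := by
          obtain ⟨p, hp⟩ := hru.exists_walk_length_eq_dist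
          have := G.dist_le (p.concat hadj)
          rw [SimpleGraph.Walk.length_concat, hp] at this
          exact this
        have hmin : min t (G.dist s u + δ) = t := min_eq_left (by
          have := hC.2.2
          omega)
        have heq : ∑ ℓ ∈ Finset.Icc 0 t, pathSum G wt ℓ s u
            = ∑ ℓ ∈ Finset.Icc (G.dist s u) (min t (G.dist s u + δ)), pathSum G wt ℓ s u := by
          rw [hmin]
          refine (Finset.sum_subset (Finset.Icc_subset_Icc (by omega) le_rfl) ?_).symm
          intro x hx hnx
          simp only [Finset.mem_Icc] at hx hnx
          exact pathSum_of_lt_dist wt (by omega)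
        rw [heq]
        exact ih u hru
      exact step1.trans (add_le_add_left (key _ fun u => by
        simp only [Finset.mem_filter, Finset.mem_univ, true_and]) _)
    · simp only [truncBF]; rw [if_neg hC]
      rcases Nat.lt_or_ge (t + 1) (G.dist s o) with h | h
      · rw [Finset.Icc_eq_empty (by omega), Finset.sum_empty]
        exact zero_le
      · have h2 : G.dist s o + δ < t + 1 := by
          by_contra h3
          exact hC ⟨hro, h, by omega⟩
        rw [show min (t+1) (G.dist s o + δ) = min t (G.dist s o + δ) by omega]
        exact ih o hro

end Main

/-- Let `o` be a 1-hop neighbor of the source `s`, i.e. `dist(s,o) = 1`.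
Then the representation of `o` after `1 + δ` iterations of the truncated Bellman–Ford
with offset `δ` at minimum aggregates all walk representations of length between `1`
and `1 + δ`: `∑_{ℓ=1}^{1+δ} ∑_{p ∈ P_ℓ(s,o)} weight(p) ≤ y⁽¹⁺ᵟ⁾(o)` in the canonical
order of `R`. -/
theorem truncBF_one_hop_ge_pathSum {V : Type*} [Fintype V] [DecidableEq V]
    (G : SimpleGraph V) [DecidableRel G.Adj] {R : Type*} [CommSemiring R] [PartialOrder R]
    [CanonicallyOrderedAdd R] [NoZeroDivisors R]
    (wt : V → V → R) (s : V) (δ : ℕ) (o : V) (hdist : G.dist s o = 1) :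
    ∑ ℓ ∈ Finset.Icc 1 (1 + δ), pathSum G wt ℓ s o ≤ truncBF G wt s δ (1 + δ) o := by
  have hr : G.Reachable s o := by
    by_contra h
    rw [G.dist_eq_zero_of_not_reachable h] at hdist
    omega
  have := truncBF_invariant wt s δ (1 + δ) o hr
  rwa [hdist, min_self] at this
end
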